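/- For every k ≥ 1 there exists a strongly k-vertex-connected digraph containing no two arc-disjoint directed cycles of equal length (and hence no two vertex-disjoint directed cycles of equal length). -/

import Mathlib

/-- A directed cycle of length `n` in the digraph with arc relation `A`. -/
def IsDicycle {V : Type*} (A : V → V → Prop) (n : ℕ) (c : ℕ → V) : Prop :=
  2 ≤ n ∧ (∀ i, A (c i) (c (i + 1))) ∧ (∀ i, c (i + n) = c i) ∧
    ∀ i j, i < n → j < n → c i = c j → i = j

namespace Stmt13

def Kk (k : ℕ) : ℕ := k * k
def Tt (k : ℕ) : ℕ := 2 ^ (2 * Kk k + 1)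
def nn (k : ℕ) : ℕ := 2 * Tt k * k

abbrev Trip (k : ℕ) := Bool × Fin k × Fin k

def Ee (k : ℕ) (t : Trip k) : ℕ := (if t.1 then Kk k else 0) + 1 + t.2.1 * k + t.2.2

def tailv (k : ℕ) (t : Trip k) : ℕ :=
  if t.1 then (Tt k - 2 ^ Ee k t) * k + t.2.1 else t.2.1

def headv (k : ℕ) (t : Trip k) : ℕ :=
  if t.1 then (2 * Tt k - 1) * k + t.2.2 else (Tt k + 2 ^ Ee k t - 1) * k + t.2.2

def P (k : ℕ) (x y : ℕ) : Prop :=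
  x / k = y / k + 1 ∨ ∃ t : Trip k, x = tailv k t ∧ y = headv k t

def A (k : ℕ) (u v : Fin (nn k)) : Prop := P k u.val v.val

section basic
variable {k : ℕ}

lemma ab_lt (a b : Fin k) : (a : ℕ) * k + b < Kk k := by
  have h2 : ((a : ℕ) + 1) * k ≤ k * k := Nat.mul_le_mul_right k a.isLt
  have h1 : (a : ℕ) * k + b < ((a : ℕ) + 1) * k := by
    have := b.isLt; rw [add_mul, one_mul]; omega
  exact h1.trans_le h2

lemma Ee_lb (t : Trip k) : 1 ≤ Ee k t := by
  unfold Ee; split <;> omega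

lemma Ee_ub (t : Trip k) : Ee k t ≤ 2 * Kk k := by
  have := ab_lt t.2.1 t.2.2
  unfold Ee; split <;> omega

lemma Ee_inj (hk : 0 < k) : Function.Injective (Ee k) := by
  rintro ⟨e, a, b⟩ ⟨e', a', b'⟩ h
  have hab := ab_lt a b
  have hab' := ab_lt a' b'
  have he : e = e' := by
    rcases e <;> rcases e' <;> simp [Ee] at h ⊢ <;> omega
  subst he
  have h2 : (a : ℕ) * k + b = (a' : ℕ) * k + b' := by
    rcases e <;> simp [Ee] at h <;> omega
  have hb : (b : ℕ) = b' := by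
    have e1 : ((a : ℕ) * k + b) % k = (b : ℕ) := by
      rw [add_comm, Nat.add_mul_mod_self_right, Nat.mod_eq_of_lt b.isLt]
    have e2 : ((a' : ℕ) * k + b') % k = (b' : ℕ) := by
      rw [add_comm, Nat.add_mul_mod_self_right, Nat.mod_eq_of_lt b'.isLt]
    rw [← e1, ← e2, h2]
  have ha : (a : ℕ) = a' := by
    have : (a : ℕ) * k = (a' : ℕ) * k := by omega
    exact Nat.eq_of_mul_eq_mul_right hk this
  exact Prod.ext rfl (Prod.ext (Fin.ext ha) (Fin.ext hb))

lemma two_le_pow (t : Trip k) : 2 ≤ 2 ^ Ee k t := by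
  calc 2 = 2 ^ 1 := rfl
  _ ≤ 2 ^ Ee k t := Nat.pow_le_pow_right (by norm_num) (Ee_lb t)

lemma pow_le_T (t : Trip k) : 2 ^ Ee k t * 2 ≤ Tt k := by
  have h : 2 ^ Ee k t ≤ 2 ^ (2 * Kk k) := Nat.pow_le_pow_right (by norm_num) (Ee_ub t)
  have hT : Tt k = 2 ^ (2 * Kk k) * 2 := by rw [Tt, pow_succ]
  omega

lemma T_ge_4 (hk : 0 < k) : 4 ≤ Tt k := by
  have h1 : 1 ≤ Kk k := Nat.mul_pos hk hk
  have h : 2 ^ 3 ≤ 2 ^ (2 * Kk k + 1) := Nat.pow_le_pow_right (by norm_num) (by omega)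
  unfold Tt; omega

lemma enc_div (hk : 0 < k) {r : ℕ} (hr : r < k) (ℓ : ℕ) : (ℓ * k + r) / k = ℓ := by
  rw [add_comm, Nat.add_mul_div_right _ _ hk, Nat.div_eq_of_lt hr, zero_add]

lemma enc_mod {r : ℕ} (hr : r < k) (ℓ : ℕ) : (ℓ * k + r) % k = r := by
  rw [add_comm, Nat.add_mul_mod_self_right, Nat.mod_eq_of_lt hr]

lemma tail_div (hk : 0 < k) (t : Trip k) :
    tailv k t / k = if t.1 then Tt k - 2 ^ Ee k t else 0 := by
  rcases t with ⟨e, a, b⟩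
  rcases e <;> simp [tailv]
  · exact enc_div hk a.isLt _

lemma tail_mod (t : Trip k) : tailv k t % k = t.2.1 := by
  rcases t with ⟨e, a, b⟩
  rcases e <;> simp [tailv]
  · exact Nat.mod_eq_of_lt a.isLt
  · exact Nat.mod_eq_of_lt a.isLt

lemma head_div (hk : 0 < k) (t : Trip k) :
    headv k t / k = if t.1 then 2 * Tt k - 1 else Tt k + 2 ^ Ee k t - 1 := by
  rcases t with ⟨e, a, b⟩
  rcases e <;> simp [headv] <;> exact enc_div hk b.isLt _

lemma head_mod (t : Trip k) : headv k t % k = t.2.2 := by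
  rcases t with ⟨e, a, b⟩
  rcases e <;> simp [headv] <;> exact Nat.mod_eq_of_lt b.isLt

lemma enc_lt {ℓ r : ℕ} (hℓ : ℓ < 2 * Tt k) (hr : r < k) : ℓ * k + r < nn k := by
  have h1 : ℓ * k + r < (ℓ + 1) * k := by rw [add_mul, one_mul]; omega
  have h2 : (ℓ + 1) * k ≤ 2 * Tt k * k := Nat.mul_le_mul_right k (by omega)
  exact lt_of_lt_of_le h1 h2

lemma tail_lt (hk : 0 < k) (t : Trip k) : tailv k t < nn k := by
  have h4 := T_ge_4 hk
  have hp := pow_le_T t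
  rcases t with ⟨e, a, b⟩
  rcases e <;> simp [tailv]
  · exact lt_of_lt_of_le a.isLt (Nat.le_mul_of_pos_left k (by omega))
  · exact enc_lt (by omega) a.isLt

lemma head_lt (hk : 0 < k) (t : Trip k) : headv k t < nn k := by
  have h4 := T_ge_4 hk
  have hp := pow_le_T t
  have h2 := two_le_pow t
  rcases t with ⟨e, a, b⟩
  rcases e <;> simp [headv] <;> exact enc_lt (by omega) b.isLt

end basic

section conn

open Relation

variable {k : ℕ}

lemma pigeon {N : ℕ} (hk : 0 < k) (X : Set (Fin N)) (hX : X.ncard ≤ k - 1)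
    (f : Fin k → Fin N) (hf : Function.Injective f) : ∃ a, f a ∉ X := by
  by_contra h
  push_neg at h
  have hsub : Set.range f ⊆ X := by rintro _ ⟨a, rfl⟩; exact h a
  have h1 : (Set.range f).ncard = k := by
    rw [← Set.image_univ, Set.ncard_image_of_injective _ hf, Set.ncard_univ]
    simp
  have h2 : (Set.range f).ncard ≤ X.ncard := Set.ncard_le_ncard hsub X.toFinite
  omega

lemma layer_witness (hk : 0 < k) (X : Set (Fin (nn k))) (hX : X.ncard ≤ k - 1)
    {ℓ : ℕ} (hℓ : ℓ < 2 * Tt k) : ∃ w : Fin (nn k), w ∉ X ∧ (w : ℕ) / k = ℓ := by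
  obtain ⟨a, ha⟩ := pigeon hk X hX (fun a => ⟨ℓ * k + a, enc_lt hℓ a.isLt⟩)
    (by intro a a' h
        have := congrArg Fin.val h
        simp only at this
        exact Fin.ext (by omega))
  exact ⟨_, ha, enc_div hk a.isLt _⟩

lemma layer_lt (u : Fin (nn k)) (hk : 0 < k) : (u : ℕ) / k < 2 * Tt k := by
  have h := u.isLt
  unfold nn at h
  exact Nat.div_lt_of_lt_mul (h.trans_eq (mul_comm _ _))

/-- descend `d+1` layers -/
lemma descend (hk : 0 < k) (X : Set (Fin (nn k))) (hX : X.ncard ≤ k - 1) :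
    ∀ d (u v : Fin (nn k)), u ∉ X → v ∉ X → (u : ℕ) / k = (v : ℕ) / k + 1 + d →
      ReflTransGen (fun a b => A k a b ∧ a ∉ X ∧ b ∉ X) u v := by
  intro d
  induction d with
  | zero =>
    intro u v hu hv h
    exact ReflTransGen.single ⟨Or.inl (by rw [h]), hu, hv⟩
  | succ d ih =>
    intro u v hu hv h
    obtain ⟨w, hwX, hw⟩ := layer_witness hk X hX
      (show (v : ℕ) / k + 1 + d < 2 * Tt k by
        have hult := layer_lt u hk; rw [h] at hult; omega)
    exact ReflTransGen.head ⟨Or.inl (by rw [h, hw]; omega), hu, hwX⟩ (ih w v hwX hv hw)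

lemma descend_lt (hk : 0 < k) (X : Set (Fin (nn k))) (hX : X.ncard ≤ k - 1)
    (u v : Fin (nn k)) (hu : u ∉ X) (hv : v ∉ X) (h : (v : ℕ) / k < (u : ℕ) / k) :
    ReflTransGen (fun a b => A k a b ∧ a ∉ X ∧ b ∉ X) u v := by
  rcases Nat.exists_eq_add_of_lt h with ⟨d, hd⟩
  exact descend hk X hX d u v hu hv (by rw [hd]; omega)

lemma connectivity (hk : 0 < k) (X : Set (Fin (nn k))) (hX : X.ncard ≤ k - 1)
    (x y : Fin (nn k)) (hx : x ∉ X) (hy : y ∉ X) :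
    ReflTransGen (fun a b => A k a b ∧ a ∉ X ∧ b ∉ X) x y := by
  classical
  set R := fun a b : Fin (nn k) => A k a b ∧ a ∉ X ∧ b ∉ X with hR
  have h4 := T_ge_4 (k := k) hk
  -- step 1 : reach a live layer-0 vertex u0
  obtain ⟨u0, hu0X, hu0, hpath0⟩ :
      ∃ u0 : Fin (nn k), u0 ∉ X ∧ (u0 : ℕ) / k = 0 ∧ ReflTransGen R x u0 := by
    by_cases h0 : (x : ℕ) / k = 0
    · exact ⟨x, hx, h0, ReflTransGen.refl⟩
    · obtain ⟨w, hwX, hw⟩ := layer_witness hk X hX (show 0 < 2 * Tt k by omega)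
      exact ⟨w, hwX, hw, descend_lt hk X hX x w hx hwX (by rw [hw]; exact Nat.pos_of_ne_zero h0)⟩
  have hu0k : (u0 : ℕ) < k := by
    by_contra hcon
    push_neg at hcon
    have h1 := (Nat.one_le_div_iff hk).2 hcon
    rw [hu0] at h1
    omega
  set a0 : Fin k := ⟨(u0 : ℕ), hu0k⟩ with ha0
  -- step 2 : jump to a live f-head v1
  obtain ⟨b0, hb0⟩ := pigeon hk X hX
    (fun b => (⟨headv k (false, a0, b), head_lt hk _⟩ : Fin (nn k)))
    (by intro b b' h
        have := congrArg (fun z : Fin (nn k) => (z : ℕ) % k) h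
        simp only [head_mod] at this
        exact Fin.ext this)
  set v1 : Fin (nn k) := ⟨headv k (false, a0, b0), head_lt hk _⟩ with hv1
  have harc1 : R u0 v1 := by
    refine ⟨Or.inr ⟨(false, a0, b0), ?_, rfl⟩, hu0X, hb0⟩
    simp [tailv, ha0]
  have hv1div : (v1 : ℕ) / k = Tt k + 2 ^ Ee k (false, a0, b0) - 1 := by
    have := head_div hk (k := k) (false, a0, b0)
    simpa using this
  have hpath1 : ReflTransGen R x v1 := hpath0.trans (ReflTransGen.single harc1)
  have hv1big : Tt k ≤ (v1 : ℕ) / k := by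
    rw [hv1div]
    have := two_le_pow (k := k) (false, a0, b0)
    omega
  -- step 3 : case on whether y is in the top layer
  by_cases htop : (y : ℕ) / k = 2 * Tt k - 1
  · -- y is in the top layer
    set by' : Fin k := ⟨(y : ℕ) % k, Nat.mod_lt _ hk⟩ with hby
    obtain ⟨a1, ha1⟩ := pigeon hk X hX
      (fun a => (⟨tailv k (true, a, by'), tail_lt hk _⟩ : Fin (nn k)))
      (by intro a a' h
          have := congrArg (fun z : Fin (nn k) => (z : ℕ) % k) h
          simp only [tail_mod] at this
          exact Fin.ext this)
    set w : Fin (nn k) := ⟨tailv k (true, a1, by'), tail_lt hk _⟩ with hw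
    have hwdiv : (w : ℕ) / k = Tt k - 2 ^ Ee k (true, a1, by') := by
      have := tail_div hk (k := k) (true, a1, by')
      simpa using this
    have hdesc : ReflTransGen R v1 w := by
      apply descend_lt hk X hX v1 w hb0 ha1
      rw [hwdiv, hv1div]
      have := two_le_pow (k := k) (true, a1, by')
      have := two_le_pow (k := k) (false, a0, b0)
      have := pow_le_T (k := k) (true, a1, by')
      omega
    have harc2 : R w y := by
      refine ⟨Or.inr ⟨(true, a1, by'), rfl, ?_⟩, ha1, hy⟩
      have hdm : k * (2 * Tt k - 1) + (y : ℕ) % k = (y : ℕ) := by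
        rw [← htop]; exact Nat.div_add_mod _ _
      show (y : ℕ) = headv k (true, a1, by')
      have hbv : (by' : ℕ) = (y : ℕ) % k := rfl
      simp only [headv, if_true]
      rw [mul_comm]
      exact hdm.symm
    exact hpath1.trans (hdesc.trans (ReflTransGen.single harc2))
  · -- y is below the top layer
    have hylt : (y : ℕ) / k < 2 * Tt k - 1 := by
      have hl := layer_lt y hk
      omega
    set z : Fin k := ⟨0, hk⟩ with hz
    obtain ⟨b1, hb1⟩ := pigeon hk X hX
      (fun b => if (⟨(2 * Tt k - 1) * k + (b : ℕ), enc_lt (by omega) b.isLt⟩ : Fin (nn k)) ∈ X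
        then ⟨(2 * Tt k - 1) * k + (b : ℕ), enc_lt (by omega) b.isLt⟩
        else ⟨tailv k (true, z, b), tail_lt hk _⟩)
      (by intro b b' h
          simp only at h
          have hpt := pow_le_T (k := k) (true, z, b)
          have hpt' := pow_le_T (k := k) (true, z, b')
          have h2t := two_le_pow (k := k) (true, z, b)
          have h2t' := two_le_pow (k := k) (true, z, b')
          split at h <;> split at h <;>
            have hval := congrArg Fin.val h
          · -- top / top
            simp only at hval
            exact Fin.ext (Nat.add_left_cancel hval)
          · -- top / gtail : impossible (different layers)
            exfalso
            have hd := congrArg (· / k) hval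
            simp only at hd
            rw [enc_div hk b.isLt] at hd
            have := tail_div hk (k := k) (true, z, b')
            simp only [if_pos] at this
            rw [this] at hd
            omega
          · exfalso
            have hd := congrArg (· / k) hval
            simp only at hd
            rw [enc_div hk b'.isLt] at hd
            have := tail_div hk (k := k) (true, z, b)
            simp only [if_pos] at this
            rw [this] at hd
            omega
          · -- gtail / gtail
            have hd := congrArg (· / k) hval
            simp only at hd
            have e1 := tail_div hk (k := k) (true, z, b)
            have e2 := tail_div hk (k := k) (true, z, b')
            simp only [if_pos] at e1 e2
            rw [e1, e2] at hd
            have hpow : 2 ^ Ee k (true, z, b) = 2 ^ Ee k (true, z, b') := by omega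
            have hE : Ee k (true, z, b) = Ee k (true, z, b') :=
              Nat.pow_right_injective (by norm_num) hpow
            have := Ee_inj hk hE
            have : b = b' := by
              have := congrArg (fun t : Trip k => t.2.2) this
              simpa using this
            exact this)
    -- unpack the if
    by_cases htb : (⟨(2 * Tt k - 1) * k + (b1 : ℕ), enc_lt (by omega) b1.isLt⟩ : Fin (nn k)) ∈ X
    · rw [if_pos htb] at hb1; exact absurd htb hb1
    rw [if_neg htb] at hb1
    set w : Fin (nn k) := ⟨tailv k (true, z, b1), tail_lt hk _⟩ with hw
    set tp : Fin (nn k) := ⟨(2 * Tt k - 1) * k + (b1 : ℕ), enc_lt (by omega) b1.isLt⟩ with htp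
    have hwdiv : (w : ℕ) / k = Tt k - 2 ^ Ee k (true, z, b1) := by
      have := tail_div hk (k := k) (true, z, b1)
      simpa using this
    have hdesc : ReflTransGen R v1 w := by
      apply descend_lt hk X hX v1 w hb0 hb1
      rw [hwdiv, hv1div]
      have := two_le_pow (k := k) (true, z, b1)
      have := two_le_pow (k := k) (false, a0, b0)
      have := pow_le_T (k := k) (true, z, b1)
      omega
    have harc2 : R w tp := by
      refine ⟨Or.inr ⟨(true, z, b1), rfl, ?_⟩, hb1, htb⟩
      simp [headv]
      rfl
    have hdesc2 : ReflTransGen R tp y := by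
      apply descend_lt hk X hX tp y htb hy
      have htpd : (tp : ℕ) / k = 2 * Tt k - 1 := enc_div hk b1.isLt _
      rw [htpd]
      exact hylt
    exact hpath1.trans (hdesc.trans ((ReflTransGen.single harc2).trans hdesc2))

end conn

section cycle

variable {k : ℕ}

lemma sum_range_two_pow (n : ℕ) : ∑ i ∈ Finset.range n, 2 ^ i = 2 ^ n - 1 := by
  induction n with
  | zero => simp
  | succ n ih =>
    rw [Finset.sum_range_succ, ih, pow_succ]
    have : 0 < 2 ^ n := Nat.pow_pos (by norm_num)
    omega

lemma sum_lt_T (hk : 0 < k) (S : Finset (Trip k)) : ∑ t ∈ S, 2 ^ Ee k t < Tt k := by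
  have h1 : ∑ t ∈ S, 2 ^ Ee k t = ∑ j ∈ S.image (Ee k), 2 ^ j :=
    (Finset.sum_image (fun x _ y _ h => Ee_inj hk h)).symm
  have h2 : S.image (Ee k) ⊆ Finset.range (2 * Kk k + 1) := by
    intro j hj
    simp only [Finset.mem_image] at hj
    obtain ⟨t, _, rfl⟩ := hj
    exact Finset.mem_range.2 (by have := Ee_ub t; omega)
  have h3 : ∑ j ∈ S.image (Ee k), 2 ^ j ≤ ∑ j ∈ Finset.range (2 * Kk k + 1), 2 ^ j :=
    Finset.sum_le_sum_of_subset h2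
  rw [sum_range_two_pow] at h3
  have h4 : 0 < 2 ^ (2 * Kk k + 1) := Nat.pow_pos (by norm_num)
  unfold Tt
  omega

lemma layer_diff (hk : 0 < k) (t : Trip k) :
    1 + ((headv k t / k : ℕ) : ℤ) - ((tailv k t / k : ℕ) : ℤ)
      = ((Tt k + 2 ^ Ee k t : ℕ) : ℤ) := by
  have hpt := pow_le_T t
  have h2t := two_le_pow t
  have h4 := T_ge_4 hk
  rw [tail_div hk, head_div hk]
  rcases t with ⟨e, a, b⟩
  rcases e
  · simp only [Bool.false_eq_true, if_false]
    rw [Nat.cast_sub (by omega : 1 ≤ Tt k + 2 ^ Ee k ((false : Bool), a, b))]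
    push_cast
    ring
  · simp only [if_true]
    rw [Nat.cast_sub (by omega : 2 ^ Ee k ((true : Bool), a, b) ≤ Tt k),
      Nat.cast_sub (by omega : 1 ≤ 2 * Tt k)]
    push_cast
    ring

lemma trip_unique (hk : 0 < k) {t t' : Trip k} (ht : tailv k t = tailv k t')
    (hh : headv k t = headv k t') : t = t' := by
  have hd := congrArg (· / k) ht
  rw [tail_div hk, tail_div hk] at hd
  have hm := congrArg (· % k) ht
  rw [tail_mod, tail_mod] at hm
  have hm2 := congrArg (· % k) hh
  rw [head_mod, head_mod] at hm2
  have hpt := pow_le_T t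
  have h2t := two_le_pow t
  have hpt' := pow_le_T (k := k) t'
  have h2t' := two_le_pow (k := k) t'
  have h4 := T_ge_4 hk
  rcases t with ⟨e, a, b⟩
  rcases t' with ⟨e', a', b'⟩
  have he : e = e' := by
    rcases e <;> rcases e' <;> simp_all <;> omega
  subst he
  simp only at hm hm2
  exact Prod.ext rfl (Prod.ext (Fin.ext hm) (Fin.ext hm2))

lemma cycle_struct (hk : 0 < k) {m : ℕ} {c : ℕ → Fin (nn k)}
    (hc : IsDicycle (A k) m c) :
    ∃ S : Finset (Trip k), S.Nonempty ∧
      m = S.card * Tt k + ∑ t ∈ S, 2 ^ Ee k t ∧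
      ∀ t ∈ S, ∃ i, i < m ∧ (c i).val = tailv k t ∧ (c (i + 1)).val = headv k t := by
  classical
  obtain ⟨hm2, harc, hper, hinj⟩ := hc
  set Fwd : ℕ → Prop :=
    fun i => ∃ t : Trip k, (c i).val = tailv k t ∧ (c (i+1)).val = headv k t with hFwd
  set F : Finset ℕ := (Finset.range m).filter Fwd with hF
  set trip : ℕ → Trip k :=
    fun i => if h : Fwd i then h.choose else (false, ⟨0, hk⟩, ⟨0, hk⟩) with htrip
  have htspec : ∀ i, Fwd i →
      (c i).val = tailv k (trip i) ∧ (c (i+1)).val = headv k (trip i) := by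
    intro i hi
    simp only [htrip, dif_pos hi]
    exact hi.choose_spec
  -- the length equation over ℤ
  have hsum0 : ∑ i ∈ Finset.range m,
      ((((c (i+1)).val / k : ℕ) : ℤ) - (((c i).val / k : ℕ) : ℤ)) = 0 := by
    rw [Finset.sum_range_sub (fun i => (((c i).val / k : ℕ) : ℤ)) m]
    have hc0 : c m = c 0 := by have := hper 0; simpa using this
    rw [hc0]; ring
  have hm_eq : (m : ℤ) = ∑ i ∈ Finset.range m,
      (1 + (((c (i+1)).val / k : ℕ) : ℤ) - (((c i).val / k : ℕ) : ℤ)) := by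
    have hsplit : ∑ i ∈ Finset.range m,
        (1 + (((c (i+1)).val / k : ℕ) : ℤ) - (((c i).val / k : ℕ) : ℤ))
        = ∑ i ∈ Finset.range m, (1 : ℤ)
          + ∑ i ∈ Finset.range m,
            ((((c (i+1)).val / k : ℕ) : ℤ) - (((c i).val / k : ℕ) : ℤ)) := by
      rw [← Finset.sum_add_distrib]
      exact Finset.sum_congr rfl (fun i _ => by ring)
    rw [hsplit, hsum0, Finset.sum_const, Finset.card_range]
    simp
  have hnonfwd : ∀ i ∈ (Finset.range m).filter (fun i => ¬ Fwd i),
      (1 + (((c (i+1)).val / k : ℕ) : ℤ) - (((c i).val / k : ℕ) : ℤ)) = 0 := by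
    intro i hi
    simp only [Finset.mem_filter, Finset.mem_range] at hi
    rcases harc i with hb | hf
    · have : (((c i).val / k : ℕ) : ℤ) = (((c (i+1)).val / k : ℕ) : ℤ) + 1 := by
        exact_mod_cast hb
      rw [this]; ring
    · exact absurd hf hi.2
  have hfwd : ∀ i ∈ F,
      (1 + (((c (i+1)).val / k : ℕ) : ℤ) - (((c i).val / k : ℕ) : ℤ))
        = ((Tt k + 2 ^ Ee k (trip i) : ℕ) : ℤ) := by
    intro i hi
    simp only [hF, Finset.mem_filter, Finset.mem_range] at hi
    obtain ⟨ht, hh⟩ := htspec i hi.2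
    rw [ht, hh]
    exact layer_diff hk (trip i)
  have hm2' : (m : ℤ) = ∑ i ∈ F, ((Tt k + 2 ^ Ee k (trip i) : ℕ) : ℤ) := by
    rw [hm_eq, ← Finset.sum_filter_add_sum_filter_not (Finset.range m) Fwd]
    rw [Finset.sum_eq_zero hnonfwd, add_zero]
    exact Finset.sum_congr rfl hfwd
  have hmnat : m = ∑ i ∈ F, (Tt k + 2 ^ Ee k (trip i)) := by
    have : (m : ℤ) = ((∑ i ∈ F, (Tt k + 2 ^ Ee k (trip i)) : ℕ) : ℤ) := by
      rw [hm2', Nat.cast_sum]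
    exact_mod_cast this
  have htripinj : ∀ i ∈ F, ∀ j ∈ F, trip i = trip j → i = j := by
    intro i hi j hj hij
    simp only [hF, Finset.mem_filter, Finset.mem_range] at hi hj
    have h1 := (htspec i hi.2).1
    have h2 := (htspec j hj.2).1
    rw [hij] at h1
    exact hinj i j hi.1 hj.1 (Fin.val_injective (h1.trans h2.symm))
  refine ⟨F.image trip, ?_, ?_, ?_⟩
  · rw [Finset.image_nonempty, Finset.nonempty_iff_ne_empty]
    intro hFe
    rw [hFe, Finset.sum_empty] at hmnat
    omega
  · rw [Finset.card_image_of_injOn htripinj, Finset.sum_image htripinj, hmnat,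
      Finset.sum_add_distrib, Finset.sum_const, smul_eq_mul]
  · intro t ht
    obtain ⟨i, hiF, rfl⟩ := Finset.mem_image.1 ht
    have hi := hiF
    simp only [hF, Finset.mem_filter, Finset.mem_range] at hi
    exact ⟨i, hi.1, htspec i hi.2⟩

lemma shares_arc (hk : 0 < k) {m : ℕ} {c c' : ℕ → Fin (nn k)}
    (h : IsDicycle (A k) m c) (h' : IsDicycle (A k) m c') :
    ∃ i j, i < m ∧ j < m ∧ (c i, c (i + 1)) = (c' j, c' (j + 1)) := by
  obtain ⟨S, hSne, hSm, hSpos⟩ := cycle_struct hk h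
  obtain ⟨S', hSne', hSm', hSpos'⟩ := cycle_struct hk h'
  have hs := sum_lt_T hk S
  have hs' := sum_lt_T hk S'
  -- equal residues mod T
  have hres : ∑ t ∈ S, 2 ^ Ee k t = ∑ t ∈ S', 2 ^ Ee k t := by
    have e1 : m % Tt k = ∑ t ∈ S, 2 ^ Ee k t := by
      rw [hSm, mul_comm, Nat.mul_add_mod, Nat.mod_eq_of_lt hs]
    have e2 : m % Tt k = ∑ t ∈ S', 2 ^ Ee k t := by
      rw [hSm', mul_comm, Nat.mul_add_mod, Nat.mod_eq_of_lt hs']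
    omega
  have himg : S.image (Ee k) = S'.image (Ee k) := by
    apply Finset.geomSum_injective (le_refl 2)
    simp only
    rw [Finset.sum_image (fun x _ y _ h => Ee_inj hk h),
      Finset.sum_image (fun x _ y _ h => Ee_inj hk h)]
    exact hres
  have hSS : S = S' := by
    ext t
    constructor
    · intro htS
      have : Ee k t ∈ S'.image (Ee k) := by
        rw [← himg]; exact Finset.mem_image_of_mem _ htS
      obtain ⟨t', ht', hE⟩ := Finset.mem_image.1 this
      rwa [← Ee_inj hk hE]
    · intro htS
      have : Ee k t ∈ S.image (Ee k) := by
        rw [himg]; exact Finset.mem_image_of_mem _ htS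
      obtain ⟨t', ht', hE⟩ := Finset.mem_image.1 this
      rwa [← Ee_inj hk hE]
  obtain ⟨t0, ht0⟩ := hSne
  obtain ⟨i, hi, hit, hih⟩ := hSpos t0 ht0
  obtain ⟨j, hj, hjt, hjh⟩ := hSpos' t0 (hSS ▸ ht0)
  refine ⟨i, j, hi, hj, ?_⟩
  rw [Prod.mk.injEq]
  exact ⟨Fin.val_injective (hit.trans hjt.symm), Fin.val_injective (hih.trans hjh.symm)⟩

end cycle

end Stmt13

/-- For every `k ≥ 1` there exists a strongly `k`-vertex-connected
(finite, loopless) digraph containing no two arc-disjoint directed cycles of equal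
length: any two directed cycles of the same length share an arc. -/
theorem stmt13 (k : ℕ) (hk : 1 ≤ k) :
    ∃ (n : ℕ) (A : Fin n → Fin n → Prop),
      k + 1 ≤ n ∧ (∀ v, ¬ A v v) ∧
      (∀ X : Set (Fin n), X.ncard ≤ k - 1 → ∀ x y, x ∉ X → y ∉ X →
        Relation.ReflTransGen (fun a b => A a b ∧ a ∉ X ∧ b ∉ X) x y) ∧
      ∀ (m : ℕ) (c c' : ℕ → Fin n), IsDicycle A m c → IsDicycle A m c' →
        ∃ i j, i < m ∧ j < m ∧ (c i, c (i + 1)) = (c' j, c' (j + 1)) := by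
  have hk0 : 0 < k := hk
  refine ⟨Stmt13.nn k, Stmt13.A k, ?_, ?_, ?_, ?_⟩
  · have h4 := Stmt13.T_ge_4 hk0
    have h2 : 2 * k ≤ 2 * Stmt13.Tt k * k := Nat.mul_le_mul_right k (by omega)
    unfold Stmt13.nn
    omega
  · intro v hvv
    unfold Stmt13.A Stmt13.P at hvv
    rcases hvv with hb | ⟨t, h1, h2⟩
    · exact absurd hb.symm (Nat.succ_ne_self _)
    · have hd := congrArg (· / k) (h1.symm.trans h2)
      rw [Stmt13.tail_div hk0, Stmt13.head_div hk0] at hd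
      have hpt := Stmt13.pow_le_T t
      have h2t := Stmt13.two_le_pow t
      have h4 := Stmt13.T_ge_4 hk0
      rcases t with ⟨e, a, b⟩
      rcases e <;> simp only [if_true, if_false, Bool.false_eq_true] at hd <;> omega
  · intro X hX x y hx hy
    exact Stmt13.connectivity hk0 X hX x y hx hy
  · intro m c c' h h'
    exact Stmt13.shares_arc hk0 h h'
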